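/- arXiv:quant-ph/0406227 — 2 statements merged into one kernel-verified Lean document; each statement's English description precedes it below -/
import Mathlib

section
/- (Theorem, part 1: unitary dynamics has zero chaos degree.) Let d ≥ 1, let ρ be a d×d complex density matrix (positive semidefinite with trace 1), let X be a d×d Hermitian matrix, and let U be a d×d unitary matrix. Define the one-step maps Θ_k*σ = UσU* for all k, and the sequence x_k = tr(X Θ_k*ρ) = tr(X U ρ U*). Then x_k is independent of k, and consequently for every n, m ∈ ℕ and every finite family of pairwise disjoint subsets of ℝ covering the values x_k, the entropic chaos degree D = Σ_{i,j} p_{ij}^{(n,n+1)} log(p_i^{(n)}/p_{ij}^{(n,n+1)}) of the sequence (x_k) equals 0; hence D(ρ; Λ_n*) = 0 for the dynamics Λ_n*ρ = UⁿρU*ⁿ. -/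
open Finset Matrix
open scoped ComplexOrder

/-- Empirical probability distribution at time `n` with window length `m+1`. -/
noncomputable def empProb (x : ℕ → ℝ) (m n : ℕ) {M : ℕ} (B : Fin M → Set ℝ) (i : Fin M) : ℝ :=
  (1 / (m + 1 : ℝ)) * ∑ k ∈ Finset.range (m + 1), (B i).indicator (fun _ => (1 : ℝ)) (x (n + k))

/-- Empirical joint probability distribution between times `n` and `n+1`. -/
noncomputable def empJoint (x : ℕ → ℝ) (m n : ℕ) {M : ℕ} (B : Fin M → Set ℝ)
    (i j : Fin M) : ℝ :=
  (1 / (m + 1 : ℝ)) * ∑ k ∈ Finset.range (m + 1),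
    (B i).indicator (fun _ => (1 : ℝ)) (x (n + k)) *
      (B j).indicator (fun _ => (1 : ℝ)) (x (n + k + 1))

/-- Entropic chaos degree of the sequence `x` with respect to the partition `B`. -/
noncomputable def ecd (x : ℕ → ℝ) (m n : ℕ) {M : ℕ} (B : Fin M → Set ℝ) : ℝ :=
  ∑ i, ∑ j, empJoint x m n B i j * Real.log (empProb x m n B i / empJoint x m n B i j)

/-- Part (1) of the theorem: unitary dynamics has zero entropic chaos degree.
The one-step maps are `Θ k τ = U τ Uᴴ`, the observable trajectory
`x k = Re tr (X · Θ k ρ)` is independent of `k`, and hence the entropic chaos degree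
of the sequence `(x k)` vanishes for every partition; in particular
`D(ρ; Λ_n*) = 0` for the dynamics `Λ_n* ρ = Uⁿ ρ (Uᴴ)ⁿ`. -/
theorem ecd_unitary_eq_zero {d : ℕ} (hd : 1 ≤ d)
    (ρ X U : Matrix (Fin d) (Fin d) ℂ)
    (hρ : ρ.PosSemidef) (hρtr : ρ.trace = 1) (hX : X.IsHermitian)
    (hU : U ∈ Matrix.unitaryGroup (Fin d) ℂ)
    (Θ : ℕ → Matrix (Fin d) (Fin d) ℂ → Matrix (Fin d) (Fin d) ℂ)
    (hΘ : ∀ k τ, Θ k τ = U * τ * Uᴴ)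
    (x : ℕ → ℝ) (hx : ∀ k, x k = ((X * Θ k ρ).trace).re) :
    (∀ k l, x k = x l) ∧
      ∀ (n m : ℕ) {M : ℕ} (B : Fin M → Set ℝ),
        (Pairwise fun i j => Disjoint (B i) (B j)) →
        (∀ k, ∃ i, x k ∈ B i) →
        ecd x m n B = 0 := by
  have hconst : ∀ k l, x k = x l := by
    intro k l
    rw [hx k, hx l, hΘ k, hΘ l]
  refine ⟨hconst, ?_⟩
  intro n m M B _ _
  -- let c i be the indicator value of x 0 in B i
  set c : Fin M → ℝ := fun i => (B i).indicator (fun _ => (1 : ℝ)) (x 0) with hc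
  have hc01 : ∀ i, c i = 0 ∨ c i = 1 := by
    intro i
    by_cases h : x 0 ∈ B i
    · right; simp [hc, Set.indicator_of_mem h]
    · left; simp [hc, Set.indicator_of_notMem h]
  have hind : ∀ (i : Fin M) (k : ℕ),
      (B i).indicator (fun _ => (1 : ℝ)) (x k) = c i := by
    intro i k
    rw [hc]
    simp only [hconst k 0]
  have hm : (m + 1 : ℝ) ≠ 0 := by positivity
  have hprob : ∀ i, empProb x m n B i = c i := by
    intro i
    unfold empProb
    simp only [hind]
    rw [Finset.sum_const, Finset.card_range, nsmul_eq_mul]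
    push_cast
    field_simp
  have hjoint : ∀ i j, empJoint x m n B i j = c i * c j := by
    intro i j
    unfold empJoint
    simp only [hind]
    rw [Finset.sum_const, Finset.card_range, nsmul_eq_mul]
    push_cast
    field_simp

  unfold ecd
  apply Finset.sum_eq_zero
  intro i _
  apply Finset.sum_eq_zero
  intro j _
  rw [hprob, hjoint]
  rcases hc01 i with hi | hi <;> rcases hc01 j with hj | hj <;>
    simp [hi, hj]
end

section
/- Let θ ∈ ℝ and let (e_n)_{n≥0} be a real sequence satisfying the recursion e_{n+1} = cos θ + (1 − cos θ) e_n². Define z_n = (1/2)(1 − e_n) and b = sin²(θ/2). Then z_{n+1} = 4 b z_n (1 − z_n) for all n; that is, the third Bloch-vector component of the spin-1/2 dynamics of Example 1 obeys the logistic map with parameter 4b. -/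
/-- The third Bloch-vector component recursion `e_{n+1} = cos θ + (1 − cos θ) e_n²` of the
spin-1/2 dynamics reduces, via `z_n = (1 − e_n)/2` and `b = sin²(θ/2)`, to the logistic map
`z_{n+1} = 4 b z_n (1 − z_n)`. -/
theorem bloch_component_logistic (θ : ℝ) (e : ℕ → ℝ)
    (he : ∀ n, e (n + 1) = Real.cos θ + (1 - Real.cos θ) * (e n) ^ 2)
    (z : ℕ → ℝ) (hz : ∀ n, z n = (1 - e n) / 2)
    (b : ℝ) (hb : b = Real.sin (θ / 2) ^ 2) :
    ∀ n, z (n + 1) = 4 * b * z n * (1 - z n) := by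
  intro n
  have hc : Real.cos θ = 1 - 2 * Real.sin (θ / 2) ^ 2 := by
    have e2 : 2 * (θ / 2) = θ := by ring
    have h := Real.cos_two_mul (θ / 2)
    rw [e2] at h
    nlinarith [Real.sin_sq_add_cos_sq (θ / 2)]
  rw [hz, hz, he, hc, hb]
  ring
end
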